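/- Let g : [0,1] → ℝ be bounded and measurable with ∫₀¹ g(u) du = 0, and set σ² = ∫₀¹ g(u)² du. Let X₁, X₂, … be i.i.d. random variables uniformly distributed on [0,1]. Then, for n large enough that 1 + g(x)/√n > 0 for all x, the local asymptotic normality (LAN) expansion holds: Σ_{j=1}^n log(1 + g(X_j)/√n) − ( n^{−1/2} Σ_{j=1}^n g(X_j) − σ²/2 ) converges to 0 in probability as n → ∞. -/

import Mathlib

open MeasureTheory ProbabilityTheory Filter Set Finset Topology

/-- Second-order Taylor bound for `log (1 + t)` when `|t| ≤ 1/2`. -/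
lemma log_taylor_bound {t : ℝ} (ht : |t| ≤ 1/2) :
    |Real.log (1 + t) - t + t ^ 2 / 2| ≤ 2 * |t| ^ 3 := by
  have h1 : |(-t)| < 1 := by rw [abs_neg]; linarith [abs_nonneg t]
  have H := Real.abs_log_sub_add_sum_range_le h1 2
  rw [Finset.sum_range_succ, Finset.sum_range_succ, Finset.sum_range_zero] at H
  norm_num at H
  have habs : |Real.log (1 + t) - t + t ^ 2 / 2| = |-t + t ^ 2 / 2 + Real.log (1 + t)| := by
    congr 1; ring
  rw [habs]
  refine H.trans ?_
  rw [div_le_iff₀ (by linarith : (0:ℝ) < 1 - |t|)]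
  nlinarith [pow_nonneg (abs_nonneg t) 3]

lemma sqrt_nat_tendsto_atTop : Tendsto (fun n : ℕ => Real.sqrt n) atTop atTop := by
  apply tendsto_atTop_atTop.2
  intro b
  refine ⟨⌈b ^ 2⌉₊, fun n hn => ?_⟩
  have hb2 : (b ^ 2 : ℝ) ≤ n := le_trans (Nat.le_ceil _) (by exact_mod_cast hn)
  calc b ≤ |b| := le_abs_self b
    _ = Real.sqrt (b ^ 2) := (Real.sqrt_sq_eq_abs b).symm
    _ ≤ Real.sqrt n := Real.sqrt_le_sqrt hb2

/-- Deterministic LAN limit. -/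
lemma det_lan (a : ℕ → ℝ) (C : ℝ) (ha : ∀ j, |a j| ≤ C) (σ2 : ℝ)
    (hlim : Tendsto (fun n : ℕ => (∑ j ∈ Finset.range n, (a j) ^ 2) / n) atTop (nhds σ2)) :
    Tendsto (fun n : ℕ =>
      (∑ j ∈ Finset.range n, Real.log (1 + a j / Real.sqrt n))
        - ((1 / Real.sqrt n) * ∑ j ∈ Finset.range n, a j - σ2 / 2)) atTop (nhds 0) := by
  have hC : 0 ≤ C := (abs_nonneg (a 0)).trans (ha 0)
  set E : ℕ → ℝ := fun n =>
    ∑ j ∈ Finset.range n,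
      (Real.log (1 + a j / Real.sqrt n) - a j / Real.sqrt n + (a j / Real.sqrt n) ^ 2 / 2)
    with hE_def
  set D : ℕ → ℝ := fun n => σ2 / 2 - (∑ j ∈ Finset.range n, (a j) ^ 2) / n / 2 with hD_def
  -- E n → 0 via squeeze
  have hE : Tendsto E atTop (nhds 0) := by
    apply squeeze_zero_norm' (a := fun n : ℕ => 2 * C ^ 3 / Real.sqrt n)
    · filter_upwards [sqrt_nat_tendsto_atTop.eventually_ge_atTop (max 1 (2 * C))] with n hn
      have h1 : (1:ℝ) ≤ Real.sqrt n := le_trans (le_max_left _ _) hn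
      have h2C : 2 * C ≤ Real.sqrt n := le_trans (le_max_right _ _) hn
      have hpos : (0:ℝ) < Real.sqrt n := lt_of_lt_of_le one_pos h1
      have hn0 : (0:ℝ) < n := by
        by_contra h
        push_neg at h
        have hn0' : (n:ℝ) = 0 := le_antisymm h (Nat.cast_nonneg n)
        rw [hn0', Real.sqrt_zero] at h1
        linarith
      have hterm : ∀ j ∈ Finset.range n,
          |Real.log (1 + a j / Real.sqrt n) - a j / Real.sqrt n + (a j / Real.sqrt n) ^ 2 / 2|
            ≤ 2 * C ^ 3 / Real.sqrt n / n := by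
        intro j _
        have habs : |a j / Real.sqrt n| ≤ C / Real.sqrt n := by
          rw [abs_div, abs_of_pos hpos]
          gcongr
          exact ha j
        have hhalf : |a j / Real.sqrt n| ≤ 1/2 := by
          refine habs.trans ?_
          rw [div_le_iff₀ hpos]
          linarith
        refine (log_taylor_bound hhalf).trans ?_
        have h3 : |a j / Real.sqrt n| ^ 3 ≤ (C / Real.sqrt n) ^ 3 :=
          pow_le_pow_left₀ (abs_nonneg _) habs 3
        have hne : Real.sqrt n ^ 2 = n := Real.sq_sqrt (Nat.cast_nonneg n)
        have h4 : Real.sqrt n ^ 3 = n * Real.sqrt n := by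
          rw [pow_succ, hne]
        have hCfor : (C / Real.sqrt n) ^ 3 = C ^ 3 / Real.sqrt n / n := by
          rw [div_pow, h4, div_div]
          ring
        calc 2 * |a j / Real.sqrt n| ^ 3 ≤ 2 * (C / Real.sqrt n) ^ 3 := by linarith
          _ = 2 * C ^ 3 / Real.sqrt n / n := by rw [hCfor]; ring
      calc ‖E n‖ ≤ ∑ j ∈ Finset.range n,
            |Real.log (1 + a j / Real.sqrt n) - a j / Real.sqrt n
              + (a j / Real.sqrt n) ^ 2 / 2| := Finset.abs_sum_le_sum_abs _ _
        _ ≤ ∑ _j ∈ Finset.range n, 2 * C ^ 3 / Real.sqrt n / n :=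
            Finset.sum_le_sum hterm
        _ = n * (2 * C ^ 3 / Real.sqrt n / n) := by
            rw [Finset.sum_const, Finset.card_range, nsmul_eq_mul]
        _ = 2 * C ^ 3 / Real.sqrt n := by
            field_simp
    · have h0 : Tendsto (fun n : ℕ => (Real.sqrt n)⁻¹) atTop (nhds 0) :=
        sqrt_nat_tendsto_atTop.inv_tendsto_atTop
      have := h0.const_mul (2 * C ^ 3)
      simpa [div_eq_mul_inv] using this
  -- D n → 0
  have hD : Tendsto D atTop (nhds 0) := by
    have := (tendsto_const_nhds (x := σ2 / 2) (f := atTop)).sub (hlim.div_const 2)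
    simpa using this
  have hsum := hE.add hD
  rw [add_zero] at hsum
  refine hsum.congr fun n => ?_
  simp only [hE_def, hD_def, Finset.sum_add_distrib, Finset.sum_sub_distrib]
  have h1 : (∑ j ∈ Finset.range n, a j / Real.sqrt n)
      = (1 / Real.sqrt n) * ∑ j ∈ Finset.range n, a j := by
    rw [← Finset.sum_div]; ring
  have h2 : (∑ j ∈ Finset.range n, (a j / Real.sqrt n) ^ 2 / 2)
      = (∑ j ∈ Finset.range n, (a j) ^ 2) / n / 2 := by
    rcases Nat.eq_zero_or_pos n with h | h
    · simp [h]
    · have hpos : (0:ℝ) < Real.sqrt n := Real.sqrt_pos.2 (by exact_mod_cast h)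
      have hne : Real.sqrt n ^ 2 = n := Real.sq_sqrt (Nat.cast_nonneg n)
      have hpt : (∑ j ∈ Finset.range n, (a j / Real.sqrt n) ^ 2)
          = (∑ j ∈ Finset.range n, (a j) ^ 2) / n := by
        rw [Finset.sum_div]
        apply Finset.sum_congr rfl
        intro j _
        rw [div_pow, hne]
      rw [← Finset.sum_div, hpt]
  rw [h1, h2]
  ring

/-- **LAN expansion.** Let `g : [0,1] → ℝ` be bounded and measurable with
`∫₀¹ g = 0` and `σ² = ∫₀¹ g²`.  Let `X₁, X₂, …` be i.i.d. uniform on `[0,1]`.  Then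
`Σ_{j=1}^n log(1 + g(X_j)/√n) − ( n^{−1/2} Σ_{j=1}^n g(X_j) − σ²/2 ) → 0` in probability
as `n → ∞`. -/
theorem statement7
    {Ω : Type*} [MeasurableSpace Ω] (P : Measure Ω) [IsProbabilityMeasure P]
    (g : ℝ → ℝ) (hgm : Measurable g)
    (C : ℝ) (hgb : ∀ y ∈ Set.Icc (0:ℝ) 1, |g y| ≤ C)
    (hg0 : ∫ y in Set.Icc (0:ℝ) 1, g y = 0)
    (σ2 : ℝ) (hσ2 : σ2 = ∫ y in Set.Icc (0:ℝ) 1, (g y) ^ 2)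
    (X : ℕ → Ω → ℝ) (hXm : ∀ j, Measurable (X j))
    (hXunif : ∀ j, P.map (X j) = volume.restrict (Set.Icc 0 1))
    (hindep : iIndepFun X P) :
    TendstoInMeasure P
      (fun n ω =>
        (∑ j ∈ Finset.range n, Real.log (1 + g (X j ω) / Real.sqrt n))
          - ((1 / Real.sqrt n) * ∑ j ∈ Finset.range n, g (X j ω) - σ2 / 2))
      atTop (fun _ => (0:ℝ)) := by
  have hφ : Measurable (fun x : ℝ => g x ^ 2) := hgm.pow_const 2
  -- a.e. all X j in [0,1]
  have hIcc : ∀ᵐ ω ∂P, ∀ j, X j ω ∈ Set.Icc (0:ℝ) 1 := by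
    rw [ae_all_iff]
    intro j
    have hmap : P.map (X j) (Set.Icc (0:ℝ) 1)ᶜ = 0 := by
      rw [hXunif j, Measure.restrict_apply measurableSet_Icc.compl, Set.compl_inter_self]
      exact measure_empty
    rw [Measure.map_apply (hXm j) measurableSet_Icc.compl] at hmap
    rw [ae_iff]
    exact hmap
  -- SLLN for g(X j)^2
  have hident : ∀ i, IdentDistrib (fun ω => g (X i ω) ^ 2) (fun ω => g (X 0 ω) ^ 2) P P := by
    intro i
    exact (⟨(hXm i).aemeasurable, (hXm 0).aemeasurable, by rw [hXunif i, hXunif 0]⟩ :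
      IdentDistrib (X i) (X 0) P P).comp hφ
  have hpind : Pairwise (Function.onFun (IndepFun · · P) fun i ω => g (X i ω) ^ 2) := by
    intro i j hij
    exact (hindep.indepFun hij).comp hφ hφ
  have hint : Integrable (fun ω => g (X 0 ω) ^ 2) P := by
    refine (integrable_const (C ^ 2)).mono' ((hφ.comp (hXm 0)).aestronglyMeasurable) ?_
    filter_upwards [hIcc] with ω hω
    have hb := hgb _ (hω 0)
    rw [Real.norm_eq_abs, abs_pow]
    exact pow_le_pow_left₀ (abs_nonneg _) hb 2
  have hmean : P[fun ω => g (X 0 ω) ^ 2] = σ2 := by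
    rw [hσ2]
    have h := integral_map (μ := P) (φ := X 0) (hXm 0).aemeasurable
      (f := fun x => g x ^ 2) hφ.aestronglyMeasurable
    rw [hXunif 0] at h
    exact h.symm
  have hslln := strong_law_ae_real (fun i ω => g (X i ω) ^ 2) hint hpind hident
  rw [hmean] at hslln
  -- combine
  have hae : ∀ᵐ ω ∂P, Tendsto (fun n : ℕ =>
      (∑ j ∈ Finset.range n, Real.log (1 + g (X j ω) / Real.sqrt n))
        - ((1 / Real.sqrt n) * ∑ j ∈ Finset.range n, g (X j ω) - σ2 / 2)) atTop (nhds 0) := by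
    filter_upwards [hIcc, hslln] with ω hω hlim
    exact det_lan (fun j => g (X j ω)) C (fun j => hgb _ (hω j)) σ2 hlim
  have hmeas : ∀ n : ℕ, AEStronglyMeasurable (fun ω =>
      (∑ j ∈ Finset.range n, Real.log (1 + g (X j ω) / Real.sqrt n))
        - ((1 / Real.sqrt n) * ∑ j ∈ Finset.range n, g (X j ω) - σ2 / 2)) P := by
    intro n
    apply Measurable.aestronglyMeasurable
    apply Measurable.sub
    · exact Finset.measurable_sum _ fun j _ =>
        Real.measurable_log.comp (measurable_const.add ((hgm.comp (hXm j)).div_const _))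
    · exact ((Finset.measurable_sum _ fun j _ => hgm.comp (hXm j)).const_mul _).sub
        measurable_const
  exact tendstoInMeasure_of_tendsto_ae hmeas hae
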